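/- Let G be a finite group of order n with identity e, and let a, b, c ∈ G, none equal to e, with a b c = e. If exactly two of a, b, c are equal (i.e., two of them coincide but not all three), then the coefficient of the monomial x_e^{n-3} x_a x_b x_c in the group determinant Θ(G) equals n. -/

import Mathlib

/-- The group determinant `Θ(G)` of a finite group `G`, as a multivariate polynomial over a
commutative ring `R` in independent commuting variables `x_g` (`g ∈ G`):
`Θ(G) = det((x_{g h⁻¹})_{g,h ∈ G})`. -/
noncomputable def groupDet (R G : Type*) [CommRing R] [Group G] [Finite G] :
    MvPolynomial G R := by
  classical
  letI := Fintype.ofFinite G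
  exact Matrix.det (Matrix.of fun g h : G => MvPolynomial.X (g * h⁻¹))

open MvPolynomial Finsupp Equiv

section aux
variable {G : Type*} [Group G] [Fintype G] [DecidableEq G]

noncomputable def permDeg (σ : Equiv.Perm G) : G →₀ ℕ :=
  ∑ i : G, Finsupp.single (σ i * i⁻¹) 1

lemma prod_X_eq (s : Finset G) (f : G → G) :
    (∏ i ∈ s, (X (f i) : MvPolynomial G ℂ)) =
      monomial (∑ i ∈ s, Finsupp.single (f i) 1) 1 := by
  induction s using Finset.cons_induction with
  | empty => simp [monomial_zero']
  | cons a s ha ih =>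
      rw [Finset.prod_cons, Finset.sum_cons, ih, X, monomial_mul, one_mul]

lemma groupDet_eq :
    groupDet ℂ G = ∑ σ : Equiv.Perm G,
      (Equiv.Perm.sign σ : ℤ) • monomial (permDeg σ) (1 : ℂ) := by
  have hdef : groupDet ℂ G
      = Matrix.det (Matrix.of fun g h : G => (X (g * h⁻¹) : MvPolynomial G ℂ)) := by
    rw [groupDet]; congr!
  rw [hdef, Matrix.det_apply]
  refine Finset.sum_congr rfl fun σ _ => ?_
  rw [show (∏ i : G, Matrix.of (fun g h : G => (X (g * h⁻¹) : MvPolynomial G ℂ)) (σ i) i)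
      = monomial (permDeg σ) (1:ℂ) from prod_X_eq Finset.univ (fun i => σ i * i⁻¹)]
  rfl

lemma coeff_groupDet (D : G →₀ ℕ) :
    coeff D (groupDet ℂ G) = ∑ σ : Equiv.Perm G,
      if permDeg σ = D then ((Equiv.Perm.sign σ : ℤ) : ℂ) else 0 := by
  rw [groupDet_eq, MvPolynomial.coeff_sum]
  refine Finset.sum_congr rfl fun σ _ => ?_
  rw [MvPolynomial.coeff_smul, coeff_monomial]
  split <;> simp
end aux


section main
variable {G : Type*} [Group G] [DecidableEq G]

/-- the 3-cycle `g ↦ t*g ↦ t*(t*g) ↦ g`. -/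
def tri (t g : G) : Equiv.Perm G :=
  Equiv.swap g (t*g) * Equiv.swap (t*g) (t*(t*g))

lemma ne1 {t : G} (h1 : t ≠ 1) (g : G) : g ≠ t*g := fun h => h1 (by
  have := h.symm; rwa [mul_eq_right] at this)

lemma ne2 {t : G} (h1 : t ≠ 1) (g : G) : t*g ≠ t*(t*g) := ne1 h1 (t*g)

lemma ne3 {t : G} (h2 : t*t ≠ 1) (g : G) : g ≠ t*(t*g) := fun h => h2 (by
  have := h.symm; rwa [← mul_assoc, mul_eq_right] at this)

lemma tri_apply_left {t : G} (h1 : t ≠ 1) (h2 : t*t ≠ 1) (g : G) : tri t g g = t*g := by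
  rw [tri, Equiv.Perm.mul_apply,
    Equiv.swap_apply_of_ne_of_ne (ne1 h1 g) (ne3 h2 g), Equiv.swap_apply_left]

lemma tri_apply_mid {t : G} (h1 : t ≠ 1) (h2 : t*t ≠ 1) (g : G) :
    tri t g (t*g) = t*(t*g) := by
  rw [tri, Equiv.Perm.mul_apply, Equiv.swap_apply_left,
    Equiv.swap_apply_of_ne_of_ne (Ne.symm (ne3 h2 g)) (Ne.symm (ne2 h1 g))]

lemma tri_apply_right {t : G} (g : G) : tri t g (t*(t*g)) = g := by
  rw [tri, Equiv.Perm.mul_apply, Equiv.swap_apply_right, Equiv.swap_apply_right]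

lemma tri_apply_other {t g x : G} (hx1 : x ≠ g) (hx2 : x ≠ t*g) (hx3 : x ≠ t*(t*g)) :
    tri t g x = x := by
  rw [tri, Equiv.Perm.mul_apply, Equiv.swap_apply_of_ne_of_ne hx2 hx3,
    Equiv.swap_apply_of_ne_of_ne hx1 hx2]

lemma tri_moved {t g x : G} (hx : tri t g x ≠ x) : x = g ∨ x = t*g ∨ x = t*(t*g) := by
  by_contra hcon
  push_neg at hcon
  exact hx (tri_apply_other hcon.1 hcon.2.1 hcon.2.2)

end main

section count
variable {G : Type*} [Group G] [Fintype G] [DecidableEq G]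

lemma sign_tri {t : G} (h1 : t ≠ 1) (h2 : t*t ≠ 1) (g : G) :
    Equiv.Perm.sign (tri t g) = 1 := by
  rw [tri, map_mul, Equiv.Perm.sign_swap (ne1 h1 g), Equiv.Perm.sign_swap (ne2 h1 g)]
  simp

lemma tri_inj {t : G} (h1 : t ≠ 1) (h2 : t*t ≠ 1) (h3 : t*t*t ≠ 1) {g h : G}
    (H : tri t g = tri t h) : g = h := by
  have hmoved : tri t g h ≠ h := by
    rw [H, tri_apply_left h1 h2]
    exact Ne.symm (ne1 h1 h)
  have ht3 : ∀ u : G, u ≠ t*(t*(t*u)) := fun u hu => h3 (by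
    have := hu.symm; rwa [← mul_assoc, ← mul_assoc, mul_eq_right] at this)
  rcases tri_moved hmoved with h' | h' | h'
  · exact h'.symm
  · exfalso
    have e2 : tri t h (t*h) = t*(t*h) := tri_apply_mid h1 h2 h
    rw [← H, h'] at e2
    rw [tri_apply_right] at e2
    exact ht3 g e2
  · exfalso
    have e2 : tri t h h = t*h := tri_apply_left h1 h2 h
    rw [← H, h'] at e2
    rw [tri_apply_right] at e2
    exact ht3 g e2

lemma permDeg_apply (σ : Equiv.Perm G) (x : G) :
    permDeg σ x = (Finset.univ.filter fun i => σ i = x * i).card := by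
  rw [permDeg, Finsupp.finset_sum_apply, Finset.card_filter]
  refine Finset.sum_congr rfl fun i _ => ?_
  rw [Finsupp.single_apply]
  congr 1
  simp only [eq_iff_iff]
  constructor
  · intro h; rw [← h]; group
  · intro h; rw [h]; group

lemma permDeg_tri {t : G} (h1 : t ≠ 1) (h2 : t*t ≠ 1) (g : G) :
    permDeg (tri t g) = Finsupp.single (1:G) (Fintype.card G - 3) +
      Finsupp.single t 2 + Finsupp.single (t⁻¹*t⁻¹) 1 := by
  classical
  set s : Finset G := {g, t*g, t*(t*g)} with hs
  have hsub : s ⊆ Finset.univ := Finset.subset_univ s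
  have hcard : s.card = 3 := by
    rw [hs]
    rw [Finset.card_insert_of_notMem (by simp [ne1 h1 g, ne3 h2 g]),
      Finset.card_insert_of_notMem (by simp [ne2 h1 g])]
    simp
  rw [permDeg, ← Finset.sum_sdiff hsub]
  have hrest : ∀ i ∈ Finset.univ \ s, Finsupp.single (tri t g i * i⁻¹) (1:ℕ) =
      Finsupp.single (1:G) 1 := by
    intro i hi
    rw [Finset.mem_sdiff, hs] at hi
    simp only [Finset.mem_insert, Finset.mem_singleton, not_or] at hi
    rw [tri_apply_other hi.2.1 hi.2.2.1 hi.2.2.2, mul_inv_cancel]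
  rw [Finset.sum_congr rfl hrest, Finset.sum_const, Finset.card_sdiff_of_subset hsub,
    Finset.card_univ, hcard, Finsupp.smul_single, smul_eq_mul, mul_one]
  have hsum3 : ∑ i ∈ s, Finsupp.single (tri t g i * i⁻¹) (1:ℕ) =
      Finsupp.single t 1 + (Finsupp.single t 1 + Finsupp.single (t⁻¹*t⁻¹) 1) := by
    rw [hs, Finset.sum_insert (by simp [ne1 h1 g, ne3 h2 g]),
      Finset.sum_insert (by simp [ne2 h1 g]), Finset.sum_singleton,
      tri_apply_left h1 h2, tri_apply_mid h1 h2, tri_apply_right]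
    have a1 : (t*g)*g⁻¹ = t := by group
    have a2 : (t*(t*g))*(t*g)⁻¹ = t := by group
    have a3 : g*(t*(t*g))⁻¹ = t⁻¹*t⁻¹ := by simp [mul_inv_rev, mul_assoc]
    rw [a1, a2, a3]
  rw [hsum3]
  have h2eq : Finsupp.single t 2 = Finsupp.single t 1 + Finsupp.single t 1 := by
    rw [← Finsupp.single_add]
  rw [h2eq]
  abel

end count


section key
variable {G : Type*} [Group G] [Fintype G] [DecidableEq G]

lemma permDeg_eq_iff {t : G} (h1 : t ≠ 1) (h2 : t*t ≠ 1) (h3 : t*t*t ≠ 1)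
    (σ : Equiv.Perm G)
    (hσ : permDeg σ = Finsupp.single (1:G) (Fintype.card G - 3) +
      Finsupp.single t 2 + Finsupp.single (t⁻¹*t⁻¹) 1) :
    ∃ g : G, σ = tri t g := by
  set D := Finsupp.single (1:G) (Fintype.card G - 3) +
      Finsupp.single t 2 + Finsupp.single (t⁻¹*t⁻¹) 1 with hD
  have hv1 : t⁻¹*t⁻¹ ≠ 1 := fun h => h2 (by
    rw [← mul_inv_rev, inv_eq_one] at h; exact h)
  have hv2 : t ≠ t⁻¹*t⁻¹ := fun h => h3 (by
    rw [← mul_inv_rev, eq_inv_iff_mul_eq_one] at h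
    rw [mul_assoc]; exact h)
  have hcnt : ∀ x : G, (Finset.univ.filter fun i => σ i = x * i).card = D x :=
    fun x => by rw [← permDeg_apply, hσ]
  have hD1 : D t = 2 := by
    simp [hD, Finsupp.single_apply, Ne.symm h1, Ne.symm hv2]
  have hD2 : D (t⁻¹*t⁻¹) = 1 := by
    simp [hD, Finsupp.single_apply, Ne.symm hv1, hv2]
  have hD0 : ∀ x : G, x ≠ 1 → x ≠ t → x ≠ t⁻¹*t⁻¹ → D x = 0 := by
    intro x hx1 hx2 hx3
    simp [hD, Finsupp.single_apply, Ne.symm hx1, Ne.symm hx2, Ne.symm hx3]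
  have hmem : ∀ i : G, σ i = i ∨ σ i = t*i ∨ σ i = (t⁻¹*t⁻¹)*i := by
    intro i
    by_contra hcon
    push_neg at hcon
    obtain ⟨c1, c2, c3⟩ := hcon
    have hxi : σ i = (σ i * i⁻¹) * i := by group
    have hx1 : σ i * i⁻¹ ≠ 1 := fun h => c1 (by rw [hxi, h, one_mul])
    have hx2 : σ i * i⁻¹ ≠ t := fun h => c2 (by rw [hxi, h])
    have hx3 : σ i * i⁻¹ ≠ t⁻¹*t⁻¹ := fun h => c3 (by rw [hxi, h])
    have h0 := hcnt (σ i * i⁻¹)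
    rw [hD0 _ hx1 hx2 hx3, Finset.card_eq_zero] at h0
    have : i ∈ Finset.univ.filter fun j => σ j = (σ i * i⁻¹) * j :=
      Finset.mem_filter.mpr ⟨Finset.mem_univ i, hxi⟩
    rw [h0] at this
    exact absurd this (Finset.notMem_empty i)
  have h1cnt : (Finset.univ.filter fun i => σ i = (t⁻¹*t⁻¹) * i).card = 1 := by
    rw [hcnt, hD2]
  obtain ⟨i₀, hi₀⟩ := Finset.card_eq_one.mp h1cnt
  have huniq : ∀ i : G, σ i = (t⁻¹*t⁻¹)*i → i = i₀ := by
    intro i hi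
    have : i ∈ Finset.univ.filter fun j => σ j = (t⁻¹*t⁻¹) * j :=
      Finset.mem_filter.mpr ⟨Finset.mem_univ i, hi⟩
    rw [hi₀] at this
    simpa using this
  have hσ0 : σ i₀ = (t⁻¹*t⁻¹)*i₀ := by
    have : i₀ ∈ Finset.univ.filter fun j => σ j = (t⁻¹*t⁻¹) * j := by
      rw [hi₀]; simp
    exact (Finset.mem_filter.mp this).2
  have hi₀ne : σ i₀ ≠ i₀ := by
    rw [hσ0]
    intro h
    exact hv1 (mul_eq_right.mp h)
  have hA : σ (t⁻¹ * i₀) = i₀ := by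
    set s := σ.symm i₀ with hs
    have hsj : σ s = i₀ := σ.apply_symm_apply i₀
    rcases hmem s with hj | hj | hj
    · exfalso
      have hfix : s = i₀ := hj.symm.trans hsj
      rw [hfix] at hsj
      exact hi₀ne hsj
    · have hk : s = t⁻¹ * i₀ := by
        have hj' : i₀ = t * s := hsj.symm.trans hj
        rw [hj', inv_mul_cancel_left]
      rw [← hk]; exact hsj
    · exfalso
      have hfix : s = i₀ := huniq _ hj
      rw [hfix] at hsj
      exact hi₀ne hsj
  have hB : σ (t⁻¹ * (t⁻¹ * i₀)) = t⁻¹ * i₀ := by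
    set s := σ.symm (t⁻¹ * i₀) with hs
    have hsj : σ s = t⁻¹ * i₀ := σ.apply_symm_apply _
    rcases hmem s with hj | hj | hj
    · exfalso
      have hfix : s = t⁻¹ * i₀ := hj.symm.trans hsj
      rw [hfix] at hsj
      rw [hsj] at hA
      exact h1 (by
        have : t⁻¹ * i₀ = i₀ := hA.symm ▸ hA
        rw [← inv_eq_one]
        exact mul_eq_right.mp hA)
    · have hk : s = t⁻¹ * (t⁻¹ * i₀) := by
        have hj' : t⁻¹ * i₀ = t * s := hsj.symm.trans hj
        rw [hj', inv_mul_cancel_left]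
      rw [← hk]; exact hsj
    · exfalso
      have hfix : s = i₀ := huniq _ hj
      rw [hfix] at hsj
      rw [hσ0] at hsj
      have : i₀ = t⁻¹ * i₀ := by
        rw [mul_assoc] at hsj
        exact mul_left_cancel hsj.symm
      exact h1 (by rw [← inv_eq_one]; exact (mul_eq_right.mp this.symm))
  have hpairne : t⁻¹ * i₀ ≠ t⁻¹ * (t⁻¹ * i₀) := by
    intro h
    have : i₀ = t⁻¹ * i₀ := mul_left_cancel h
    exact h1 (by rw [← inv_eq_one]; exact mul_eq_right.mp this.symm)
  have hpair : Finset.univ.filter (fun i => σ i = t * i) =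
      {t⁻¹ * i₀, t⁻¹ * (t⁻¹ * i₀)} := by
    refine (Finset.eq_of_subset_of_card_le ?_ ?_).symm
    · intro x hx
      simp only [Finset.mem_insert, Finset.mem_singleton] at hx
      rcases hx with rfl | rfl
      · refine Finset.mem_filter.mpr ⟨Finset.mem_univ _, ?_⟩
        rw [hA, mul_inv_cancel_left]
      · refine Finset.mem_filter.mpr ⟨Finset.mem_univ _, ?_⟩
        rw [hB, mul_inv_cancel_left]
    · rw [hcnt, hD1, Finset.card_insert_of_notMem (by simp [hpairne]),
        Finset.card_singleton]
  have hpairmem : ∀ i : G, σ i = t * i → i = t⁻¹ * i₀ ∨ i = t⁻¹ * (t⁻¹ * i₀) := by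
    intro i hi
    have : i ∈ Finset.univ.filter (fun j => σ j = t * j) :=
      Finset.mem_filter.mpr ⟨Finset.mem_univ i, hi⟩
    rw [hpair] at this
    simpa using this
  refine ⟨t⁻¹ * (t⁻¹ * i₀), ?_⟩
  set g := t⁻¹ * (t⁻¹ * i₀) with hg
  have hg1 : t * g = t⁻¹ * i₀ := by rw [hg, mul_inv_cancel_left]
  have hg2 : t * (t * g) = i₀ := by rw [hg1, mul_inv_cancel_left]
  apply Equiv.ext
  intro x
  rcases hmem x with hx | hx | hx
  · have hx1 : x ≠ g := by
      rintro rfl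
      rw [hx] at hB
      exact hpairne hB.symm
    have hx2 : x ≠ t * g := by
      rintro rfl
      rw [hg1] at hx
      rw [hx] at hA
      exact h1 (by rw [← inv_eq_one]; exact mul_eq_right.mp hA)
    have hx3 : x ≠ t * (t * g) := by
      rintro rfl
      rw [hg2] at hx
      exact hi₀ne hx
    rw [tri_apply_other hx1 hx2 hx3]
    exact hx
  · rcases hpairmem x hx with h' | h'
    · have hxg : x = t * g := by rw [h', hg1]
      rw [hxg] at hx ⊢
      rw [tri_apply_mid h1 h2]
      exact hx
    · have hxg : x = g := by rw [h', hg]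
      rw [hxg] at hx ⊢
      rw [tri_apply_left h1 h2]
      exact hx
  · have hxg : x = t * (t * g) := by rw [huniq _ hx, hg2]
    rw [hxg] at hx ⊢
    rw [tri_apply_right]
    rw [hx, hg2, hg, mul_assoc]

end key

section final
variable {G : Type*} [Group G] [Fintype G] [DecidableEq G]

lemma coeff_key {t : G} (h1 : t ≠ 1) (h2 : t*t ≠ 1) (h3 : t*t*t ≠ 1) :
    MvPolynomial.coeff (Finsupp.single (1:G) (Fintype.card G - 3) +
      Finsupp.single t 2 + Finsupp.single (t⁻¹*t⁻¹) 1) (groupDet ℂ G) =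
      (Fintype.card G : ℂ) := by
  rw [coeff_groupDet, ← Finset.sum_filter]
  have hfil : (Finset.univ.filter fun σ : Equiv.Perm G =>
      permDeg σ = Finsupp.single (1:G) (Fintype.card G - 3) +
        Finsupp.single t 2 + Finsupp.single (t⁻¹*t⁻¹) 1) =
      Finset.univ.image (tri t) := by
    ext σ
    simp only [Finset.mem_filter, Finset.mem_univ, true_and, Finset.mem_image]
    constructor
    · intro h
      obtain ⟨g, hg⟩ := permDeg_eq_iff h1 h2 h3 σ h
      exact ⟨g, hg.symm⟩
    · rintro ⟨g, rfl⟩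
      exact permDeg_tri h1 h2 g
  rw [hfil, Finset.sum_image (fun x _ y _ h => tri_inj h1 h2 h3 h)]
  simp [sign_tri h1 h2]

end final

/-- If `a, b, c ≠ e`, `a * b * c = e`, and exactly two of `a, b, c` are equal, then the
coefficient of the monomial `x_e^{n-3} x_a x_b x_c` in `Θ(G)` equals `n = |G|`. -/
theorem coeff_groupDet_two_equal {G : Type*} [Group G] [Fintype G]
    (a b c : G) (ha : a ≠ 1) (hb : b ≠ 1) (hc : c ≠ 1) (habc : a * b * c = 1)
    (htwo : (a = b ∧ a ≠ c) ∨ (a = c ∧ a ≠ b) ∨ (b = c ∧ a ≠ b)) :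
    MvPolynomial.coeff
      (Finsupp.single (1 : G) (Fintype.card G - 3) +
        Finsupp.single a 1 + Finsupp.single b 1 + Finsupp.single c 1)
      (groupDet ℂ G) = (Fintype.card G : ℂ) := by
  classical
  have h11 : (2:ℕ) = 1 + 1 := rfl
  rcases htwo with ⟨hab, hac⟩ | ⟨hac, hab⟩ | ⟨hbc, hab⟩
  · -- a = b, a ≠ c
    rw [← hab] at habc ⊢
    have hcval : c = a⁻¹ * a⁻¹ := by
      calc c = a⁻¹ * a⁻¹ * (a*a*c) := by group
      _ = a⁻¹ * a⁻¹ := by rw [habc, mul_one]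
    have h2 : a*a ≠ 1 := fun h => hc (by rw [hcval, ← mul_inv_rev, h, inv_one])
    have h3 : a*a*a ≠ 1 := fun h => hac (by
      rw [hcval]
      calc a = a⁻¹*a⁻¹*(a*a*a) := by group
      _ = a⁻¹*a⁻¹ := by rw [h, mul_one])
    have hdeg : Finsupp.single (1 : G) (Fintype.card G - 3) +
        Finsupp.single a 1 + Finsupp.single a 1 + Finsupp.single c 1 =
        Finsupp.single (1 : G) (Fintype.card G - 3) +
        Finsupp.single a 2 + Finsupp.single (a⁻¹*a⁻¹) 1 := by
      rw [hcval, h11, Finsupp.single_add]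
      abel
    rw [hdeg]
    exact coeff_key ha h2 h3
  · -- a = c, a ≠ b
    rw [← hac] at habc ⊢
    have hbval : b = a⁻¹ * a⁻¹ := by
      calc b = a⁻¹ * (a*b*a) * a⁻¹ := by group
      _ = a⁻¹ * a⁻¹ := by rw [habc]; group
    have h2 : a*a ≠ 1 := fun h => hb (by rw [hbval, ← mul_inv_rev, h, inv_one])
    have h3 : a*a*a ≠ 1 := fun h => hab (by
      rw [hbval]
      calc a = a⁻¹*a⁻¹*(a*a*a) := by group
      _ = a⁻¹*a⁻¹ := by rw [h, mul_one])
    have hdeg : Finsupp.single (1 : G) (Fintype.card G - 3) +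
        Finsupp.single a 1 + Finsupp.single b 1 + Finsupp.single a 1 =
        Finsupp.single (1 : G) (Fintype.card G - 3) +
        Finsupp.single a 2 + Finsupp.single (a⁻¹*a⁻¹) 1 := by
      rw [hbval, h11, Finsupp.single_add]
      abel
    rw [hdeg]
    exact coeff_key ha h2 h3
  · -- b = c, a ≠ b
    rw [← hbc] at habc ⊢
    have haval : a = b⁻¹ * b⁻¹ := by
      calc a = (a*b*b) * (b⁻¹*b⁻¹) := by group
      _ = b⁻¹ * b⁻¹ := by rw [habc]; group
    have h2 : b*b ≠ 1 := fun h => ha (by rw [haval, ← mul_inv_rev, h, inv_one])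
    have h3 : b*b*b ≠ 1 := fun h => hab (by
      rw [haval]
      calc b⁻¹*b⁻¹ = b⁻¹*b⁻¹*(b*b*b) := by rw [h, mul_one]
      _ = b := by group)
    have hdeg : Finsupp.single (1 : G) (Fintype.card G - 3) +
        Finsupp.single a 1 + Finsupp.single b 1 + Finsupp.single b 1 =
        Finsupp.single (1 : G) (Fintype.card G - 3) +
        Finsupp.single b 2 + Finsupp.single (b⁻¹*b⁻¹) 1 := by
      rw [haval, h11, Finsupp.single_add]
      abel
    rw [hdeg]
    exact coeff_key hb h2 h3
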